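/- Let {E^k} be a finite collection of measurable sets with union E of finite measure. Then Σ_k |E^k| ≤ (1/2)Σ_k |E^k| + (1/2)|E| + 2|E|^{1/2} (Σ_{k_1<k_2} |E^{k_1} ∩ E^{k_2}|)^{1/2}; consequently Σ_k |E^k| ≤ |E| + 4|E|^{1/2}(Σ_{k_1<k_2} |E^{k_1} ∩ E^{k_2}|)^{1/2}. -/

import Mathlib

open MeasureTheory
open scoped ENNReal

theorem stmt3 (d : ℕ) (K : ℕ) (E : Fin K → Set (Fin d → ℝ))
    (hE : ∀ k, MeasurableSet (E k))
    (hfin : volume (⋃ k, E k) < ⊤) :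
    (∑ k, (volume (E k)).toReal ≤
      (1 / 2) * ∑ k, (volume (E k)).toReal + (1 / 2) * (volume (⋃ k, E k)).toReal +
        2 * Real.sqrt ((volume (⋃ k, E k)).toReal) *
          Real.sqrt (∑ p ∈ Finset.univ.filter (fun p : Fin K × Fin K => p.1 < p.2),
            (volume (E p.1 ∩ E p.2)).toReal)) ∧
    (∑ k, (volume (E k)).toReal ≤
      (volume (⋃ k, E k)).toReal +
        4 * Real.sqrt ((volume (⋃ k, E k)).toReal) *
          Real.sqrt (∑ p ∈ Finset.univ.filter (fun p : Fin K × Fin K => p.1 < p.2),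
            (volume (E p.1 ∩ E p.2)).toReal)) := by
  classical
  set μ := (volume : Measure (Fin d → ℝ)) with hμ
  set A := ⋃ k, E k with hAdef
  have hAm : MeasurableSet A := MeasurableSet.iUnion hE
  have hkA : ∀ k, E k ⊆ A := fun k => Set.subset_iUnion E k
  have hfinK : ∀ k, μ (E k) ≠ ⊤ := fun k =>
    (lt_of_le_of_lt (measure_mono (hkA k)) hfin).ne
  have hfinKJ : ∀ (k j : Fin K), μ (E k ∩ E j) ≠ ⊤ := fun k j =>
    (lt_of_le_of_lt (measure_mono (Set.inter_subset_left.trans (hkA k))) hfin).ne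
  set f : (Fin d → ℝ) → ℝ≥0∞ := fun x => ∑ k, (E k).indicator 1 x with hfdef
  have hmeas : ∀ k, Measurable ((E k).indicator (1 : (Fin d → ℝ) → ℝ≥0∞)) :=
    fun k => measurable_one.indicator (hE k)
  have hfm : Measurable f := by
    apply Finset.measurable_sum
    exact fun k _ => hmeas k
  -- integral of f
  have h1 : ∫⁻ x, f x ∂μ = ∑ k, μ (E k) := by
    rw [hfdef]
    rw [lintegral_finset_sum _ fun k _ => hmeas k]
    simp_rw [lintegral_indicator_one (hE _)]
  -- integral of f^2
  have h2 : ∫⁻ x, f x ^ (2:ℝ) ∂μ = ∑ p : Fin K × Fin K, μ (E p.1 ∩ E p.2) := by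
    have hsq : ∀ x, f x ^ (2:ℝ) = ∑ p : Fin K × Fin K, (E p.1 ∩ E p.2).indicator 1 x := by
      intro x
      rw [show (2:ℝ) = ((2:ℕ):ℝ) by norm_num, ENNReal.rpow_natCast, sq, hfdef]
      rw [Finset.sum_mul_sum]
      rw [Fintype.sum_prod_type]
      congr 1; ext k; congr 1; ext j
      rw [Set.inter_indicator_one]
      rfl
    simp_rw [hsq]
    rw [lintegral_finset_sum _ fun p _ => measurable_one.indicator ((hE p.1).inter (hE p.2))]
    simp_rw [lintegral_indicator_one ((hE _).inter (hE _))]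
  -- Cauchy-Schwarz
  have hCS : ∫⁻ x, f x ∂μ ≤ (∫⁻ x, f x ^ (2:ℝ) ∂μ) ^ (1/2 : ℝ) * (μ A) ^ (1/2 : ℝ) := by
    have hg : Measurable (A.indicator (1 : (Fin d → ℝ) → ℝ≥0∞)) :=
      measurable_one.indicator hAm
    have heq : ∀ x, f x = (f * A.indicator (1 : (Fin d → ℝ) → ℝ≥0∞)) x := by
      intro x
      by_cases hx : x ∈ A
      · simp [Set.indicator_of_mem hx]
      · have : f x = 0 := by
          rw [hfdef]
          apply Finset.sum_eq_zero
          intro k _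
          exact Set.indicator_of_notMem (fun hk => hx (hkA k hk)) 1
        simp [this]
      
    calc ∫⁻ x, f x ∂μ = ∫⁻ x, (f * A.indicator (1 : (Fin d → ℝ) → ℝ≥0∞)) x ∂μ := by simp_rw [heq]
    _ ≤ (∫⁻ x, f x ^ (2:ℝ) ∂μ) ^ (1/2 : ℝ) * (∫⁻ x, (A.indicator 1 x) ^ (2:ℝ) ∂μ) ^ (1/2 : ℝ) := by
        exact ENNReal.lintegral_mul_le_Lp_mul_Lq μ ⟨by norm_num, by norm_num, by norm_num⟩ hfm.aemeasurable hg.aemeasurable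
    _ = (∫⁻ x, f x ^ (2:ℝ) ∂μ) ^ (1/2 : ℝ) * (μ A) ^ (1/2 : ℝ) := by
        congr 1
        congr 1
        have : ∀ x, (A.indicator (1 : (Fin d → ℝ) → ℝ≥0∞) x) ^ (2:ℝ) = A.indicator 1 x := by
          intro x
          by_cases hx : x ∈ A <;> simp [Set.indicator_of_mem, Set.indicator_of_notMem, hx,
            ENNReal.rpow_two]
        simp_rw [this]
        exact lintegral_indicator_one hAm
  -- real quantities
  set S := ∑ k, (μ (E k)).toReal with hSdef
  set U := (μ A).toReal with hUdef
  set P := ∑ p ∈ Finset.univ.filter (fun p : Fin K × Fin K => p.1 < p.2),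
      (μ (E p.1 ∩ E p.2)).toReal with hPdef
  have hS0 : 0 ≤ S := Finset.sum_nonneg fun _ _ => ENNReal.toReal_nonneg
  have hU0 : 0 ≤ U := ENNReal.toReal_nonneg
  have hP0 : 0 ≤ P := Finset.sum_nonneg fun _ _ => ENNReal.toReal_nonneg
  set a : Fin K × Fin K → ℝ := fun p => (μ (E p.1 ∩ E p.2)).toReal with hadef
  -- splitting the double sum
  have hswap : ∑ p ∈ Finset.univ.filter (fun p : Fin K × Fin K => p.2 < p.1), a p
      = ∑ p ∈ Finset.univ.filter (fun p : Fin K × Fin K => p.1 < p.2), a p := by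
    apply Finset.sum_nbij' (fun p => p.swap) (fun p => p.swap)
    · intro p hp; simp only [Finset.mem_filter, Finset.mem_univ, true_and] at hp ⊢; exact hp
    · intro p hp; simp only [Finset.mem_filter, Finset.mem_univ, true_and] at hp ⊢; exact hp
    · intro p _; simp
    · intro p _; simp
    · intro p _; simp [hadef, Set.inter_comm]
  have hdiag : ∑ p ∈ Finset.univ.filter (fun p : Fin K × Fin K => p.1 = p.2), a p
      = ∑ k, a (k, k) := by
    rw [Finset.sum_filter, Fintype.sum_prod_type]
    congr 1; ext k
    simp
  have htotal : ∑ p : Fin K × Fin K, a p = S + 2 * P := by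
    rw [← Finset.sum_filter_add_sum_filter_not Finset.univ
      (fun p : Fin K × Fin K => p.1 < p.2) a]
    rw [← Finset.sum_filter_add_sum_filter_not
      (Finset.univ.filter (fun p : Fin K × Fin K => ¬ p.1 < p.2))
      (fun p : Fin K × Fin K => p.1 = p.2) a]
    have e1 : (Finset.univ.filter (fun p : Fin K × Fin K => ¬ p.1 < p.2)).filter
        (fun p : Fin K × Fin K => p.1 = p.2)
        = Finset.univ.filter (fun p : Fin K × Fin K => p.1 = p.2) := by
      rw [Finset.filter_filter]
      apply Finset.filter_congr
      intro p _
      constructor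
      · rintro ⟨_, h⟩; exact h
      · intro h; exact ⟨by rw [h]; exact lt_irrefl _, h⟩
    have e2 : (Finset.univ.filter (fun p : Fin K × Fin K => ¬ p.1 < p.2)).filter
        (fun p : Fin K × Fin K => ¬ p.1 = p.2)
        = Finset.univ.filter (fun p : Fin K × Fin K => p.2 < p.1) := by
      rw [Finset.filter_filter]
      apply Finset.filter_congr
      intro p _
      constructor
      · rintro ⟨h1, h2⟩
        rcases lt_trichotomy p.1 p.2 with h | h | h
        · exact absurd h h1
        · exact absurd h h2
        · exact h
      · intro h; exact ⟨fun h' => absurd (h'.trans h) (lt_irrefl _), fun h' => by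
          rw [h'] at h; exact absurd h (lt_irrefl _)⟩
    rw [e1, e2, hdiag, hswap]
    have : ∀ k : Fin K, a (k, k) = (μ (E k)).toReal := by
      intro k; simp [hadef, Set.inter_self]
    simp_rw [this]
    rw [hSdef]
    ring
  -- convert Cauchy-Schwarz to reals
  have hT2ne : (∑ p : Fin K × Fin K, μ (E p.1 ∩ E p.2)) ≠ ⊤ :=
    (ENNReal.sum_lt_top.2 fun p _ => (hfinKJ p.1 p.2).lt_top).ne
  have hkey : S ≤ Real.sqrt (S + 2 * P) * Real.sqrt U := by
    have h := hCS
    rw [h1, h2] at h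
    have hRne : (∑ p : Fin K × Fin K, μ (E p.1 ∩ E p.2)) ^ (1/2:ℝ) * (μ A) ^ (1/2:ℝ) ≠ ⊤ :=
      ENNReal.mul_ne_top (ENNReal.rpow_ne_top_of_nonneg (by norm_num) hT2ne)
        (ENNReal.rpow_ne_top_of_nonneg (by norm_num) hfin.ne)
    have h' := ENNReal.toReal_mono hRne h
    rw [ENNReal.toReal_mul, ← ENNReal.toReal_rpow, ← ENNReal.toReal_rpow,
      ← Real.sqrt_eq_rpow, ← Real.sqrt_eq_rpow,
      ENNReal.toReal_sum (fun k _ => hfinK k),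
      ENNReal.toReal_sum (fun p _ => hfinKJ p.1 p.2)] at h'
    have hta : ∑ p : Fin K × Fin K, (μ (E p.1 ∩ E p.2)).toReal = S + 2 * P := htotal
    rw [hta] at h'
    exact h'
  -- arithmetic
  have hs2 : Real.sqrt 2 ≤ 2 := by
    nlinarith [Real.sq_sqrt (by norm_num : (0:ℝ) ≤ 2), Real.sqrt_nonneg 2]
  have hsplitsqrt : Real.sqrt (S + 2 * P) ≤ Real.sqrt S + Real.sqrt 2 * Real.sqrt P := by
    have hle : S + 2 * P ≤ (Real.sqrt S + Real.sqrt 2 * Real.sqrt P) ^ 2 := by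
      nlinarith [Real.sq_sqrt hS0, Real.sq_sqrt hP0,
        Real.sq_sqrt (by norm_num : (0:ℝ) ≤ 2), Real.sqrt_nonneg S, Real.sqrt_nonneg P,
        Real.sqrt_nonneg 2, mul_nonneg (mul_nonneg (Real.sqrt_nonneg 2) (Real.sqrt_nonneg S)) (Real.sqrt_nonneg P)]
    calc Real.sqrt (S + 2 * P) ≤ Real.sqrt ((Real.sqrt S + Real.sqrt 2 * Real.sqrt P) ^ 2) :=
          Real.sqrt_le_sqrt hle
      _ = Real.sqrt S + Real.sqrt 2 * Real.sqrt P := Real.sqrt_sq (by positivity)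
  have hmain : S ≤ (1/2) * S + (1/2) * U + 2 * Real.sqrt U * Real.sqrt P := by
    have h2 : S ≤ (Real.sqrt S + Real.sqrt 2 * Real.sqrt P) * Real.sqrt U :=
      hkey.trans (mul_le_mul_of_nonneg_right hsplitsqrt (Real.sqrt_nonneg U))
    nlinarith [Real.sq_sqrt hS0, Real.sq_sqrt hU0, Real.sqrt_nonneg S, Real.sqrt_nonneg U,
      Real.sqrt_nonneg P, sq_nonneg (Real.sqrt S - Real.sqrt U),
      mul_nonneg (Real.sqrt_nonneg U) (Real.sqrt_nonneg P)]
  exact ⟨hmain, by linarith⟩
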